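/- arXiv:1910.09033 — 2 statements merged into one kernel-verified Lean document; each statement's English description precedes it below -/
import Mathlib

section
/- The fiber of the Lagrangian L_Σ over a point is exactly the equator circle {J_θ}: a matrix J ∈ M₄(ℝ) is a positively oriented compatible complex structure mapping span(e₁,e₂) into span(e₃,e₄) if and only if J = cos θ · Q + sin θ · R for some θ ∈ ℝ; equivalently, the set of such J equals {a·Q + b·R : a,b ∈ ℝ, a² + b² = 1}. -/
open Matrix

noncomputable def Jmat (θ : ℝ) : Matrix (Fin 4) (Fin 4) ℝ :=
  !![0, 0, -Real.cos θ, -Real.sin θ;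
     0, 0, -Real.sin θ, Real.cos θ;
     Real.cos θ, Real.sin θ, 0, 0;
     Real.sin θ, -Real.cos θ, 0, 0]

noncomputable def Qmat : Matrix (Fin 4) (Fin 4) ℝ := Jmat 0

noncomputable def Rmat : Matrix (Fin 4) (Fin 4) ℝ := Jmat (Real.pi / 2)

noncomputable def Pf (A : Matrix (Fin 4) (Fin 4) ℝ) : ℝ :=
  A 0 1 * A 2 3 - A 0 2 * A 1 3 + A 0 3 * A 1 2

noncomputable def e (i : Fin 4) : Fin 4 → ℝ := Pi.single i 1

/-- The condition that `J` is a positively oriented compatible complex structure on `ℝ⁴`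
mapping `span(e₁,e₂)` into `span(e₃,e₄)`. -/
def IsEquatorStructure (J : Matrix (Fin 4) (Fin 4) ℝ) : Prop :=
  J * J = -1 ∧ Jᵀ = -J ∧ Pf J = 1 ∧
    Submodule.map J.mulVecLin (Submodule.span ℝ {e 0, e 1}) ≤ Submodule.span ℝ {e 2, e 3}

lemma exists_theta (a b : ℝ) (h : a^2+b^2=1) : ∃ θ, Real.cos θ = a ∧ Real.sin θ = b := by
  have ha1 : -1 ≤ a := by nlinarith
  have ha2 : a ≤ 1 := by nlinarith
  rcases le_or_gt 0 b with hb | hb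
  · refine ⟨Real.arccos a, Real.cos_arccos ha1 ha2, ?_⟩
    rw [Real.sin_arccos, show 1 - a^2 = b^2 by linarith]
    exact Real.sqrt_sq hb
  · refine ⟨-Real.arccos a, by rw [Real.cos_neg]; exact Real.cos_arccos ha1 ha2, ?_⟩
    rw [Real.sin_neg, Real.sin_arccos, show 1 - a^2 = b^2 by linarith,
      Real.sqrt_sq_eq_abs, abs_of_neg hb, neg_neg]

lemma comb (θ : ℝ) : Real.cos θ • Qmat + Real.sin θ • Rmat = Jmat θ := by
  ext i j
  fin_cases i <;> fin_cases j <;>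
    simp [Jmat, Qmat, Rmat, Real.cos_pi_div_two, Real.sin_pi_div_two, Matrix.vecHead,
      Matrix.vecTail]

lemma backward (θ : ℝ) : IsEquatorStructure (Jmat θ) := by
  have key := Real.sin_sq_add_cos_sq θ
  refine ⟨?_, ?_, ?_, ?_⟩
  · ext i j
    fin_cases i <;> fin_cases j <;>
      simp [Jmat, Matrix.mul_apply, Fin.sum_univ_four, Matrix.one_apply, Matrix.vecHead,
        Matrix.vecTail] <;> nlinarith [key]
  · ext i j
    fin_cases i <;> fin_cases j <;> simp [Jmat, Matrix.vecHead, Matrix.vecTail]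
  · simp [Pf, Jmat]; nlinarith [key]
  · rw [Submodule.map_le_iff_le_comap, Submodule.span_le]
    rintro x (rfl | rfl) <;> simp only [SetLike.mem_coe, Submodule.mem_comap] <;>
      rw [Submodule.mem_span_pair]
    · refine ⟨Real.cos θ, Real.sin θ, ?_⟩
      funext j
      fin_cases j <;>
        simp [Jmat, e, Matrix.mulVec, dotProduct, Fin.sum_univ_four, Pi.single_apply]
    · refine ⟨Real.sin θ, -Real.cos θ, ?_⟩
      funext j
      fin_cases j <;>
        simp [Jmat, e, Matrix.mulVec, dotProduct, Fin.sum_univ_four, Pi.single_apply]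

lemma forward (J : Matrix (Fin 4) (Fin 4) ℝ) (h : IsEquatorStructure J) :
    ∃ θ : ℝ, J = Jmat θ := by
  obtain ⟨h1, h2, h3, h4⟩ := h
  have hT : ∀ i j : Fin 4, J j i = -J i j := by
    intro i j
    simpa using congrFun (congrFun h2 i) j
  have hdiag : ∀ i, J i i = 0 := by
    intro i; have := hT i i; linarith
  have H : ∀ i j : Fin 4, J i 0 * J 0 j + J i 1 * J 1 j + J i 2 * J 2 j + J i 3 * J 3 j
      = -(if i = j then 1 else 0) := by
    intro i j
    have := congrFun (congrFun h1 i) j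
    simpa [Matrix.mul_apply, Fin.sum_univ_four, Matrix.neg_apply, Matrix.one_apply] using this
  have hmem : ∀ i : Fin 4, i = 0 ∨ i = 1 → ∀ k : Fin 4, k = 0 ∨ k = 1 → J k i = 0 := by
    intro i hi k hk
    have hx : J.mulVecLin (e i) ∈ Submodule.span ℝ {e 2, e 3} :=
      h4 ⟨e i, Submodule.subset_span
        (by rcases hi with rfl | rfl; exact Or.inl rfl; exact Or.inr rfl), rfl⟩
    obtain ⟨m, n, hmn⟩ := Submodule.mem_span_pair.mp hx
    have hv : (J.mulVecLin (e i)) k = J k i := by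
      simp [Matrix.mulVecLin_apply, Matrix.mulVec, dotProduct, Fin.sum_univ_four, e,
        Pi.single_apply]
    have hz : (m • e 2 + n • e 3) k = 0 := by
      rcases hk with rfl | rfl <;> simp [e, Pi.single_apply]
    rw [← hv, ← hmn]
    exact hz
  have h10 : J 1 0 = 0 := hmem 0 (Or.inl rfl) 1 (Or.inr rfl)
  have h01 : J 0 1 = 0 := by have := hT 1 0; rw [h10] at this; linarith
  have t02 : J 2 0 = -J 0 2 := hT 0 2
  have t03 : J 3 0 = -J 0 3 := hT 0 3
  have t12 : J 2 1 = -J 1 2 := hT 1 2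
  have t13 : J 3 1 = -J 1 3 := hT 1 3
  have t23 : J 3 2 = -J 2 3 := hT 2 3
  have hunit : J 0 2 ^ 2 + J 0 3 ^ 2 = 1 := by
    have h00 := H 0 0
    rw [if_pos rfl, hdiag 0, h01, t02, t03] at h00
    linear_combination -h00
  have E2 : J 0 2 * J 1 2 + J 0 3 * J 1 3 = 0 := by
    have h := H 0 1
    rw [if_neg (by decide), h01, t12, t13] at h
    linear_combination -h
  have E3 : J 0 3 * J 1 2 - J 0 2 * J 1 3 = 1 := by
    unfold Pf at h3
    rw [h01] at h3
    linear_combination h3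
  have hbf : J 0 2 * J 2 3 = 0 := by
    have h := H 0 3
    rw [if_neg (by decide), hdiag 0, h01, hdiag 3] at h
    linear_combination h
  have hcf : J 0 3 * J 2 3 = 0 := by
    have h := H 0 2
    rw [if_neg (by decide), hdiag 0, h01, hdiag 2, t23] at h
    linear_combination -h
  have hf : J 2 3 = 0 := by
    have key : J 2 3 * (J 0 2 ^ 2 + J 0 3 ^ 2)
        = J 0 2 * (J 0 2 * J 2 3) + J 0 3 * (J 0 3 * J 2 3) := by ring
    rw [hunit, hbf, hcf] at key; linarith
  have hd : J 1 2 = J 0 3 := by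
    linear_combination J 0 2 * E2 + J 0 3 * E3 - J 1 2 * hunit
  have he : J 1 3 = -J 0 2 := by
    linear_combination J 0 3 * E2 - J 0 2 * E3 - J 1 3 * hunit
  obtain ⟨θ, hcos, hsin⟩ := exists_theta (-J 0 2) (-J 0 3) (by nlinarith [hunit])
  refine ⟨θ, ?_⟩
  ext i j
  fin_cases i <;> fin_cases j <;>
    simp [Jmat, hcos, hsin, Matrix.vecHead, Matrix.vecTail] <;>
    first
      | exact hdiag _
      | exact h01 | exact h10
      | linarith [t02, t03, t12, t13, t23, hd, he, hf]

/-- The fiber of the Lagrangian `L_Σ` over a point is exactly the equator circle `{J_θ}`: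
a matrix `J` is a positively oriented compatible complex structure mapping `span(e₁,e₂)`
into `span(e₃,e₄)` iff `J = cos θ • Q + sin θ • R` for some `θ`; equivalently, the set of
such `J` equals `{a • Q + b • R : a² + b² = 1}`. -/
theorem equator_fiber_characterization :
    (∀ J : Matrix (Fin 4) (Fin 4) ℝ,
      IsEquatorStructure J ↔ ∃ θ : ℝ, J = Real.cos θ • Qmat + Real.sin θ • Rmat) ∧
    {J : Matrix (Fin 4) (Fin 4) ℝ | IsEquatorStructure J} =
      {M : Matrix (Fin 4) (Fin 4) ℝ | ∃ a b : ℝ, a ^ 2 + b ^ 2 = 1 ∧ M = a • Qmat + b • Rmat} := by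
  have hfirst : ∀ J : Matrix (Fin 4) (Fin 4) ℝ,
      IsEquatorStructure J ↔ ∃ θ : ℝ, J = Real.cos θ • Qmat + Real.sin θ • Rmat := by
    intro J
    constructor
    · intro h
      obtain ⟨θ, hθ⟩ := forward J h
      exact ⟨θ, by rw [hθ, comb]⟩
    · rintro ⟨θ, rfl⟩
      rw [comb]; exact backward θ
  refine ⟨hfirst, ?_⟩
  ext M
  simp only [Set.mem_setOf_eq, hfirst M]
  constructor
  · rintro ⟨θ, rfl⟩
    exact ⟨Real.cos θ, Real.sin θ, by nlinarith [Real.sin_sq_add_cos_sq θ], rfl⟩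
  · rintro ⟨a, b, hab, rfl⟩
    obtain ⟨θ, hc, hs⟩ := exists_theta a b hab
    exact ⟨θ, by rw [hc, hs]⟩
end

section
/- The twistor fiber over a point of an oriented Riemannian 4-manifold is a 2-sphere: the set of positively oriented compatible complex structures on ℝ⁴, i.e. {J ∈ M₄(ℝ) : J² = −I, Jᵀ = −J, Pf(J) = 1}, equals the unit sphere {a·P + b·Q + c·R : a,b,c ∈ ℝ, a² + b² + c² = 1} in the span of the three matrices P, Q, R. -/
open Matrix

set_option maxHeartbeats 1000000

/-- The matrix `P` with `P e₁ = e₂`, `P e₂ = −e₁`, `P e₃ = e₄`, `P e₄ = −e₃`. -/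
def Pmat : Matrix (Fin 4) (Fin 4) ℝ :=
  !![0, -1, 0, 0;
     1, 0, 0, 0;
     0, 0, 0, -1;
     0, 0, 1, 0]

lemma Qmat_eq : Qmat = !![0, 0, -1, 0; 0, 0, 0, 1; 1, 0, 0, 0; 0, -1, 0, 0] := by
  simp [Qmat, Jmat]

lemma Rmat_eq : Rmat = !![0, 0, 0, -1; 0, 0, -1, 0; 0, 1, 0, 0; 1, 0, 0, 0] := by
  simp [Rmat, Jmat]

lemma comb_eq (a b c : ℝ) : a • Pmat + b • Qmat + c • Rmat =
    !![0, -a, -b, -c; a, 0, -c, b; b, c, 0, -a; c, -b, a, 0] := by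
  rw [Qmat_eq, Rmat_eq, Pmat]
  ext i j
  fin_cases i <;> fin_cases j <;> simp [Matrix.vecHead, Matrix.vecTail]

/-- The twistor fiber is a 2-sphere: the set of positively oriented compatible complex
structures on `ℝ⁴` equals the unit sphere in the span of `P`, `Q`, `R`. -/
theorem twistor_fiber_is_sphere :
    {J : Matrix (Fin 4) (Fin 4) ℝ | J * J = -1 ∧ Jᵀ = -J ∧ Pf J = 1} =
      {M : Matrix (Fin 4) (Fin 4) ℝ |
        ∃ a b c : ℝ, a ^ 2 + b ^ 2 + c ^ 2 = 1 ∧ M = a • Pmat + b • Qmat + c • Rmat} := by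
  ext J
  simp only [Set.mem_setOf_eq]
  constructor
  · rintro ⟨hJ, hT, hPf⟩
    have hskew : ∀ i j, J j i = -J i j := by
      intro i j
      have := congrFun (congrFun hT i) j
      simpa [Matrix.transpose_apply, Matrix.neg_apply] using this
    have hd : ∀ i, J i i = 0 := by intro i; have := hskew i i; linarith
    have s10 := hskew 0 1
    have s20 := hskew 0 2
    have s30 := hskew 0 3
    have s21 := hskew 1 2
    have s31 := hskew 1 3
    have s32 := hskew 2 3
    have e0 := congrFun (congrFun hJ 0) 0
    have e1 := congrFun (congrFun hJ 1) 1
    have e2 := congrFun (congrFun hJ 2) 2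
    have e3 := congrFun (congrFun hJ 3) 3
    simp only [Matrix.mul_apply, Fin.sum_univ_four, Matrix.neg_apply, Matrix.one_apply,
      if_pos rfl, if_true, s10, s20, s30, s21, s31, s32, hd, zero_mul, mul_zero, zero_add,
      add_zero] at e0 e1 e2 e3
    have hPf' : J 0 1 * J 2 3 - J 0 2 * J 1 3 + J 0 3 * J 1 2 = 1 := hPf
    have key : (J 2 3 - J 0 1)^2 + (J 1 3 + J 0 2)^2 + (J 1 2 - J 0 3)^2 = 0 := by
      linear_combination (e0 + e1 + e2 + e3) * (-1/2 : ℝ) - 2 * hPf'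
    have q1 : (J 2 3 - J 0 1)^2 = 0 := by
      nlinarith [sq_nonneg (J 2 3 - J 0 1), sq_nonneg (J 1 3 + J 0 2), sq_nonneg (J 1 2 - J 0 3)]
    have q2 : (J 1 3 + J 0 2)^2 = 0 := by
      nlinarith [sq_nonneg (J 2 3 - J 0 1), sq_nonneg (J 1 3 + J 0 2), sq_nonneg (J 1 2 - J 0 3)]
    have q3 : (J 1 2 - J 0 3)^2 = 0 := by
      nlinarith [sq_nonneg (J 2 3 - J 0 1), sq_nonneg (J 1 3 + J 0 2), sq_nonneg (J 1 2 - J 0 3)]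
    have hw : J 2 3 = J 0 1 := by have := sq_eq_zero_iff.mp q1; linarith
    have hv : J 1 3 = -J 0 2 := by have := sq_eq_zero_iff.mp q2; linarith
    have hu : J 1 2 = J 0 3 := by have := sq_eq_zero_iff.mp q3; linarith
    refine ⟨-J 0 1, -J 0 2, -J 0 3, by nlinarith [e0], ?_⟩
    rw [comb_eq]
    ext i j
    fin_cases i <;> fin_cases j <;>
      simp [hd, s10, s20, s30, s21, s31, s32, hw, hv, hu]
  · rintro ⟨a, b, c, h, rfl⟩
    rw [comb_eq]
    refine ⟨?_, ?_, ?_⟩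
    · ext i j
      fin_cases i <;> fin_cases j <;>
        simp [Matrix.mul_apply, Fin.sum_univ_four, Matrix.neg_apply, Matrix.one_apply] <;>
        linarith [h]
    · ext i j
      fin_cases i <;> fin_cases j <;> simp
    · simp [Pf]
      linear_combination h
end
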